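/- Let A = iBi be a source algebra of a block B with defect group P, and let L ≅ O_τ(P⋊E) be the canonically embedded source algebra of the Brauer correspondent (via Puig's embedding L → A), where O is a complete discrete valuation ring with maximal ideal πO. Let γ : L → A be an O-algebra homomorphism such that γ(u) = u for all u ∈ P and such that the induced map k⊗_O L → k⊗_O A is the canonical inclusion. Then there is an element c ∈ 1 + πA^P such that γ(y) = c^{-1}yc for all y ∈ L. -/

import Mathlib

open scoped TensorProduct
noncomputable section

universe u v w

namespace Paper

/-! ## Tensor product over a possibly noncommutative ring -/

section NCT

variable (A : Type u) [Ring A]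
variable (M : Type v) [AddCommGroup M] [Module Aᵐᵒᵖ M]
variable (N : Type w) [AddCommGroup N] [Module A N]

/-- The submodule of relations defining the balanced tensor product `M ⊗_A N` of a right
`A`-module `M` and a left `A`-module `N`. -/
def tensorRel : Submodule ℤ (TensorProduct ℤ M N) :=
  Submodule.span ℤ {z | ∃ (a : A) (m : M) (n : N),
    z = (MulOpposite.op a • m) ⊗ₜ[ℤ] n - m ⊗ₜ[ℤ] (a • n)}

/-- The balanced tensor product `M ⊗_A N` of a right `A`-module and a left `A`-module. -/
def Tensor : Type (max v w) := TensorProduct ℤ M N ⧸ tensorRel A M N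

instance : AddCommGroup (Tensor A M N) :=
  inferInstanceAs (AddCommGroup (TensorProduct ℤ M N ⧸ tensorRel A M N))

/-- The quotient map onto the balanced tensor product. -/
def Tensor.q (t : TensorProduct ℤ M N) : Tensor A M N := Submodule.Quotient.mk t

lemma Tensor.q_surjective : Function.Surjective (Tensor.q A M N) :=
  Submodule.Quotient.mk_surjective _

lemma Tensor.q_add (t s : TensorProduct ℤ M N) :
    Tensor.q A M N (t + s) = Tensor.q A M N t + Tensor.q A M N s := rfl

/-- The canonical map `M → N → M ⊗_A N`. -/
def Tensor.mk (m : M) (n : N) : Tensor A M N :=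
  Tensor.q A M N (m ⊗ₜ[ℤ] n)

section Left

variable (B : Type*) [Ring B] [Module B M] [SMulCommClass Aᵐᵒᵖ B M]

/-- Left multiplication by an element of `B` on the balanced tensor product, when `M` is a
`(B,A)`-bimodule. -/
def Tensor.lsmulAux (b : B) : Tensor A M N →ₗ[ℤ] Tensor A M N :=
  Submodule.mapQ _ _ (AddMonoidHom.toIntLinearMap
      (DistribSMul.toAddMonoidHom (TensorProduct ℤ M N) b)) (by
    rw [tensorRel, Submodule.span_le]
    rintro z ⟨a, m, n, rfl⟩
    simp only [SetLike.mem_coe, Submodule.mem_comap, AddMonoidHom.coe_toIntLinearMap,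
      DistribSMul.toAddMonoidHom_apply, smul_sub, TensorProduct.smul_tmul']
    rw [← smul_comm (MulOpposite.op a) b m]
    exact Submodule.subset_span ⟨a, b • m, n, rfl⟩)

instance : SMul B (Tensor A M N) :=
  ⟨fun b x => Tensor.lsmulAux A M N B b x⟩

instance Tensor.instLeftModule : Module B (Tensor A M N) :=
  Function.Surjective.module B
    { toFun := Submodule.Quotient.mk (p := tensorRel A M N),
      map_zero' := rfl,
      map_add' := fun _ _ => rfl }
    (Submodule.Quotient.mk_surjective _)
    (fun b x => rfl)

end Left


section Right

variable (C : Type*) [Ring C] [Module Cᵐᵒᵖ N] [SMulCommClass A Cᵐᵒᵖ N]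

/-- Right multiplication by an element of `Cᵐᵒᵖ` on the balanced tensor product, when `N` is an
`(A,C)`-bimodule. -/
def Tensor.rsmulAux (c : Cᵐᵒᵖ) : Tensor A M N →ₗ[ℤ] Tensor A M N :=
  Submodule.mapQ _ _ (LinearMap.lTensor M (AddMonoidHom.toIntLinearMap
      (DistribSMul.toAddMonoidHom N c))) (by
    rw [tensorRel, Submodule.span_le]
    rintro z ⟨a, m, n, rfl⟩
    simp only [SetLike.mem_coe, Submodule.mem_comap, map_sub, LinearMap.lTensor_tmul,
      AddMonoidHom.coe_toIntLinearMap, DistribSMul.toAddMonoidHom_apply]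
    show LinearMap.lTensor M (AddMonoidHom.toIntLinearMap (DistribSMul.toAddMonoidHom N c))
      ((MulOpposite.op a • m) ⊗ₜ[ℤ] n - m ⊗ₜ[ℤ] (a • n)) ∈ tensorRel A M N
    rw [map_sub, LinearMap.lTensor_tmul, LinearMap.lTensor_tmul]
    simp only [AddMonoidHom.coe_toIntLinearMap, DistribSMul.toAddMonoidHom_apply]
    rw [← smul_comm a c n]
    exact Submodule.subset_span ⟨a, m, c • n, rfl⟩)

instance : SMul Cᵐᵒᵖ (Tensor A M N) :=
  ⟨fun c x => Tensor.rsmulAux A M N C c x⟩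

lemma Tensor.rsmul_mk (c : Cᵐᵒᵖ) (t : TensorProduct ℤ M N) :
    c • (Tensor.q A M N t) =
      Tensor.q A M N ((LinearMap.lTensor M (AddMonoidHom.toIntLinearMap
        (DistribSMul.toAddMonoidHom N c))) t) := rfl

instance Tensor.instRightModule : Module Cᵐᵒᵖ (Tensor A M N) where
  one_smul x := by
    obtain ⟨t, rfl⟩ := Tensor.q_surjective A M N x
    rw [Tensor.rsmul_mk]
    congr 1
    induction t with
    | zero => simp
    | tmul m n => simp
    | add x y hx hy => simp [map_add, hx, hy]
  mul_smul c d x := by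
    obtain ⟨t, rfl⟩ := Tensor.q_surjective A M N x
    rw [Tensor.rsmul_mk, Tensor.rsmul_mk, Tensor.rsmul_mk]
    congr 1
    induction t with
    | zero => simp
    | tmul m n => simp [mul_smul]
    | add x y hx hy => simp only [map_add, hx, hy]
  smul_zero c := map_zero (Tensor.rsmulAux A M N C c)
  smul_add c x y := map_add (Tensor.rsmulAux A M N C c) x y
  add_smul c d x := by
    obtain ⟨t, rfl⟩ := Tensor.q_surjective A M N x
    rw [Tensor.rsmul_mk, Tensor.rsmul_mk, Tensor.rsmul_mk, ← Tensor.q_add]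
    congr 1
    induction t with
    | zero => simp
    | tmul m n => simp [add_smul, TensorProduct.tmul_add]
    | add x y hx hy => rw [map_add, hx, hy, map_add, map_add]; abel
  zero_smul x := by
    obtain ⟨t, rfl⟩ := Tensor.q_surjective A M N x
    rw [Tensor.rsmul_mk]
    show _ = Tensor.q A M N 0
    congr 1
    induction t with
    | zero => simp
    | tmul m n => simp
    | add x y hx hy => simp [map_add, hx, hy]

instance Tensor.instSMulCommClass (B : Type*) [Ring B] [Module B M] [SMulCommClass Aᵐᵒᵖ B M] :
    SMulCommClass B Cᵐᵒᵖ (Tensor A M N) where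
  smul_comm b c x := by
    obtain ⟨t, rfl⟩ := Tensor.q_surjective A M N x
    show Tensor.q A M N _ = Tensor.q A M N _
    congr 1
    induction t with
    | zero => rfl
    | tmul m n => rfl
    | add x y hx hy =>
      erw [map_add, map_add, hx, hy]
      first
        | (erw [map_add (AddMonoidHom.toIntLinearMap
            (DistribSMul.toAddMonoidHom (TensorProduct ℤ M N) b)) x y, map_add])
        | (rw [← map_add]; rfl)

instance Tensor.instSMulCommClass' (B : Type*) [Ring B] [Module B M] [SMulCommClass Aᵐᵒᵖ B M] :
    SMulCommClass Cᵐᵒᵖ B (Tensor A M N) :=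
  SMulCommClass.symm _ _ _

end Right

section Extra

variable (A : Type u) [Ring A]
variable (M : Type v) [AddCommGroup M] [Module Aᵐᵒᵖ M]
variable (N : Type w) [AddCommGroup N] [Module A N]

lemma Tensor.mk_balance (a : A) (m : M) (n : N) :
    Tensor.q A M N (m ⊗ₜ[ℤ] (a • n)) = Tensor.q A M N ((MulOpposite.op a • m) ⊗ₜ[ℤ] n) := by
  show (Submodule.Quotient.mk _ : TensorProduct ℤ M N ⧸ tensorRel A M N) = Submodule.Quotient.mk _
  rw [Submodule.Quotient.eq, ← neg_sub]
  exact neg_mem (Submodule.subset_span ⟨a, m, n, rfl⟩)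

lemma Tensor.lsmul_mk (B : Type*) [Ring B] [Module B M] [SMulCommClass Aᵐᵒᵖ B M]
    (b : B) (t : TensorProduct ℤ M N) :
    b • (Tensor.q A M N t) = Tensor.q A M N
      ((LinearMap.rTensor N (AddMonoidHom.toIntLinearMap
        (DistribSMul.toAddMonoidHom M b))) t) := rfl

instance Tensor.instTower (B S : Type*) [Ring B] [Ring S] [Module B M]
    [SMulCommClass Aᵐᵒᵖ B M] [Module S M] [SMulCommClass Aᵐᵒᵖ S M] [SMul S B]
    [IsScalarTower S B M] : IsScalarTower S B (Tensor A M N) where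
  smul_assoc s b x := by
    obtain ⟨t, rfl⟩ := Tensor.q_surjective A M N x
    rw [Tensor.lsmul_mk, Tensor.lsmul_mk, Tensor.lsmul_mk]
    congr 1
    have hmap : (AddMonoidHom.toIntLinearMap (DistribSMul.toAddMonoidHom M (s • b))) =
        (AddMonoidHom.toIntLinearMap (DistribSMul.toAddMonoidHom M s)).comp
          (AddMonoidHom.toIntLinearMap (DistribSMul.toAddMonoidHom M b)) := by
      apply LinearMap.ext
      intro m
      exact smul_assoc s b m
    rw [hmap, LinearMap.rTensor_comp]
    rfl

end Extra

end NCT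


/-! ## Generic module-theoretic notions -/

section Generic

variable (R : Type*) [Ring R]

/-- `M` is (isomorphic to) a direct summand of `W` as `R`-modules. -/
def IsDirectSummand (W M : Type*) [AddCommMonoid W] [AddCommMonoid M]
    [Module R W] [Module R M] : Prop :=
  ∃ (ι : M →ₗ[R] W) (p : W →ₗ[R] M), p.comp ι = LinearMap.id

/-- There exists an isomorphism of `R`-modules `X ≅ Y`. -/
def ModIsoNonempty (X Y : Type*) [AddCommMonoid X] [AddCommMonoid Y]
    [Module R X] [Module R Y] : Prop :=
  ∃ e : X ≃+ Y, ∀ (r : R) (x : X), e (r • x) = r • e x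

/-- There exists an isomorphism of `(B,C)`-bimodules `X ≅ Y` (right `C`-module structures
given as left `Cᵐᵒᵖ`-module structures). -/
def BimodIsoNonempty (B C : Type*) [Ring B] [Ring C] (X Y : Type*)
    [AddCommMonoid X] [AddCommMonoid Y] [Module B X] [Module Cᵐᵒᵖ X]
    [Module B Y] [Module Cᵐᵒᵖ Y] : Prop :=
  ∃ e : X ≃+ Y, (∀ (b : B) (x : X), e (b • x) = b • e x) ∧
    (∀ (c : Cᵐᵒᵖ) (x : X), e (c • x) = c • e x)

/-- `M` is (isomorphic to) a direct summand of `W` as a `(B,C)`-bimodule. -/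
def IsBimodDirectSummand (B C : Type*) [Ring B] [Ring C] (W M : Type*)
    [AddCommMonoid W] [AddCommMonoid M] [Module B W] [Module Cᵐᵒᵖ W]
    [Module B M] [Module Cᵐᵒᵖ M] : Prop :=
  ∃ (ι : M →+ W) (p : W →+ M),
    (∀ (b : B) (m : M), ι (b • m) = b • ι m) ∧
    (∀ (c : Cᵐᵒᵖ) (m : M), ι (c • m) = c • ι m) ∧
    (∀ (b : B) (w : W), p (b • w) = b • p w) ∧
    (∀ (c : Cᵐᵒᵖ) (w : W), p (c • w) = c • p w) ∧
    p.comp ι = AddMonoidHom.id M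

/-- An `R`-module is indecomposable if it is nonzero and its only idempotent endomorphisms
are `0` and the identity. -/
def IsIndecomposableModule (M : Type*) [AddCommMonoid M] [Module R M] : Prop :=
  Nontrivial M ∧ ∀ f : M →ₗ[R] M, f.comp f = f → f = 0 ∨ f = LinearMap.id

/-- A `(B,C)`-bimodule is indecomposable if it is nonzero and its only idempotent bimodule
endomorphisms are `0` and the identity. -/
def IsIndecomposableBimod (B C : Type*) [Ring B] [Ring C] (M : Type*) [AddCommMonoid M]
    [Module B M] [Module Cᵐᵒᵖ M] : Prop :=
  Nontrivial M ∧ ∀ f : M →+ M, (∀ (b : B) (m : M), f (b • m) = b • f m) →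
    (∀ (c : Cᵐᵒᵖ) (m : M), f (c • m) = c • f m) → f.comp f = f → f = 0 ∨ f = AddMonoidHom.id M

/-- An idempotent of a ring is primitive if it is nonzero and admits no decomposition as a sum
of two nonzero orthogonal idempotents. -/
def IsPrimitiveIdempotent (e : R) : Prop :=
  e * e = e ∧ e ≠ 0 ∧ ∀ c d : R, c * c = c → d * d = d → c * d = 0 → d * c = 0 →
    e = c + d → c = 0 ∨ d = 0

/-- Two idempotents are conjugate if some unit conjugates one into the other. -/
def AreConjugateIdempotents (e f : R) : Prop :=
  ∃ u : Rˣ, (u : R) * e * (↑u⁻¹ : R) = f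

end Generic

/-! ## Bimodules over a ring, and invertible bimodules -/

/-- A bundled `(A,A)`-bimodule. -/
structure BimodPack (A : Type u) [Ring A] : Type (u + 1) where
  V : Type u
  [acg : AddCommGroup V]
  [lmod : Module A V]
  [rmod : Module Aᵐᵒᵖ V]
  [comm : SMulCommClass A Aᵐᵒᵖ V]
  [comm' : SMulCommClass Aᵐᵒᵖ A V]

attribute [instance] BimodPack.acg BimodPack.lmod BimodPack.rmod BimodPack.comm BimodPack.comm'

/-- An `(A,A)`-bimodule `M` is invertible if it is finitely generated projective as a left and
as a right `A`-module and there is a bimodule `N` with `M ⊗_A N ≅ A ≅ N ⊗_A M` as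
`(A,A)`-bimodules. -/
def IsInvertibleBimod (A : Type u) [Ring A] (M : Type u) [AddCommGroup M] [Module A M]
    [Module Aᵐᵒᵖ M] [SMulCommClass A Aᵐᵒᵖ M] [SMulCommClass Aᵐᵒᵖ A M] : Prop :=
  Module.Finite A M ∧ Module.Projective A M ∧ Module.Finite Aᵐᵒᵖ M ∧ Module.Projective Aᵐᵒᵖ M ∧
  ∃ N : BimodPack A, (Module.Finite A N.V ∧ Module.Projective A N.V ∧
      Module.Finite Aᵐᵒᵖ N.V ∧ Module.Projective Aᵐᵒᵖ N.V) ∧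
    BimodIsoNonempty A A (Tensor A M N.V) A ∧ BimodIsoNonempty A A (Tensor A N.V M) A

/-! ## Group algebras and bimodules over them -/

section GroupAlgebra

/-- commutation of the action of an algebra with the action of scalars -/
lemma algebra_smul_comm {R A M : Type*} [CommSemiring R] [Semiring A] [Algebra R A]
    [AddCommMonoid M] [Module A M] [Module R M] [IsScalarTower R A M]
    (r : R) (a : A) (m : M) : a • r • m = r • a • m := by
  rw [← algebraMap_smul A r m, ← mul_smul, ← Algebra.commutes, mul_smul, algebraMap_smul]

variable (O : Type u) [CommRing O]

/-- The group algebra of `G` over `O`. -/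
abbrev GA (G : Type u) [Group G] : Type u := MonoidAlgebra O G

variable (G : Type u) [Group G]

/-- A bimodule over the group algebra `OG` is `O`-central if the left and right actions of `O`
agree. -/
class OCentralBimodule (M : Type u) [AddCommGroup M] [Module (GA O G)ᵐᵒᵖ M]
    [Module O M] : Prop where
  right_compat : ∀ (r : O) (m : M), MulOpposite.op (algebraMap O (GA O G) r) • m = r • m

section BiRep

variable (M : Type u) [AddCommGroup M] [Module (GA O G) M] [Module (GA O G)ᵐᵒᵖ M]
  [SMulCommClass (GA O G) (GA O G)ᵐᵒᵖ M] [Module O M] [IsScalarTower O (GA O G) M]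
  [OCentralBimodule O G M]

lemma ga_right_smul_comm (r : O) (a : (GA O G)ᵐᵒᵖ) (m : M) :
    a • r • m = r • a • m := by
  rw [← OCentralBimodule.right_compat (G := G) r m, ← mul_smul,
    ← OCentralBimodule.right_compat (G := G) r (a • m), ← mul_smul]
  congr 1
  rw [← MulOpposite.op_unop a, ← MulOpposite.op_mul, ← MulOpposite.op_mul, Algebra.commutes]

/-- The `O(G × G)`-module structure on an `OG`-`OG`-bimodule, given by
`(x, y) • m = x • m • y⁻¹`. -/
def biRep : Representation O (G × G) M where
  toFun g :=
    { toFun := fun m =>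
        (MonoidAlgebra.of O G g.1) • (MulOpposite.op (MonoidAlgebra.of O G g.2⁻¹) • m)
      map_add' := fun x y => by simp only [smul_add]
      map_smul' := fun r m => by
        simp only [RingHom.id_apply]
        rw [ga_right_smul_comm O G M, algebra_smul_comm] }
  map_one' := by
    ext m
    simp only [Prod.fst_one, Prod.snd_one, inv_one, map_one, LinearMap.coe_mk,
      AddHom.coe_mk, LinearMap.id_coe, id_eq]
    rw [MulOpposite.op_one, one_smul, one_smul]
    exact (Module.End.one_apply m).symm
  map_mul' g h := by
    ext m
    simp only [Prod.fst_mul, Prod.snd_mul, LinearMap.coe_mk, AddHom.coe_mk, Module.End.mul_apply,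
      mul_inv_rev, map_mul]
    rw [MulOpposite.op_mul, mul_smul, mul_smul]
    congr 1
    rw [smul_comm (MonoidAlgebra.of O G h.1)]

/-- An `OG`-`OG`-bimodule regarded as an `O(G × G)`-module. -/
abbrev DiagMod : Type u := (biRep O G M).asModule

end BiRep

instance {k G V : Type*} [CommSemiring k] [Monoid G] [AddCommGroup V] [Module k V]
    (rho : Representation k G V) : AddCommGroup rho.asModule :=
  inferInstanceAs (AddCommGroup V)

/-- Restriction of a module over a group algebra along a group homomorphism. -/
def ResAlong {H K : Type u} [Group H] [Group K] (f : H →* K) (X : Type u)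
    [AddCommMonoid X] [Module (MonoidAlgebra O K) X] : Type u := X

instance {H K : Type u} [Group H] [Group K] (f : H →* K) (X : Type u) [AddCommMonoid X]
    [Module (MonoidAlgebra O K) X] : AddCommMonoid (ResAlong O f X) :=
  inferInstanceAs (AddCommMonoid X)

instance ResAlong.instAddCommGroup {H K : Type u} [Group H] [Group K] (f : H →* K) (X : Type u)
    [AddCommGroup X] [Module (MonoidAlgebra O K) X] : AddCommGroup (ResAlong O f X) :=
  inferInstanceAs (AddCommGroup X)

noncomputable instance {H K : Type u} [Group H] [Group K] (f : H →* K) (X : Type u)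
    [AddCommMonoid X] [Module (MonoidAlgebra O K) X] :
    Module (MonoidAlgebra O H) (ResAlong O f X) :=
  Module.compHom X (MonoidAlgebra.mapDomainRingHom O f)

end GroupAlgebra

/-! ## Relative projectivity, vertices and sources -/

section Vertices

variable (O : Type u) [CommRing O]
variable {Gam : Type u} [Group Gam]

/-- The action of a group element on a module over the group algebra, as an additive map. -/
def gAct (X : Type u) [AddCommMonoid X] [Module (MonoidAlgebra O Gam) X] (g : Gam) : X →+ X :=
  DistribSMul.toAddMonoidHom X (MonoidAlgebra.of O Gam g)

/-- An additive endomorphism of a module over `O Γ` which is `O`-linear and commutes with the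
action of the subgroup `Q`, i.e. an `OQ`-endomorphism. -/
def IsRelEndo (Q : Subgroup Gam) (X : Type u) [AddCommMonoid X]
    [Module (MonoidAlgebra O Gam) X] (f : X →+ X) : Prop :=
  (∀ (r : O) (x : X), f (algebraMap O (MonoidAlgebra O Gam) r • x) =
      algebraMap O (MonoidAlgebra O Gam) r • f x) ∧
  ∀ g ∈ Q, ∀ x : X, f (gAct O X g x) = gAct O X g (f x)

/-- The relative trace map `Tr_Q^Γ` on endomorphisms, using a set of representatives of the
left cosets `Γ/Q`. -/
noncomputable def relTrace [Finite Gam] (Q : Subgroup Gam) (X : Type u) [AddCommMonoid X]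
    [Module (MonoidAlgebra O Gam) X] (f : X →+ X) : X →+ X :=
  letI : Fintype (Gam ⧸ Q) := Fintype.ofFinite _
  ∑ c : Gam ⧸ Q, (gAct O X c.out).comp (f.comp (gAct O X c.out⁻¹))

/-- Higman's criterion, as a definition: an `OΓ`-module is relatively `Q`-projective if the
identity is the relative trace of an `OQ`-endomorphism.  This is equivalent to `X` being
isomorphic to a direct summand of `Ind_Q^Γ Res_Q X`. -/
noncomputable def IsRelativelyProjective [Finite Gam] (Q : Subgroup Gam) (X : Type u)
    [AddCommMonoid X] [Module (MonoidAlgebra O Gam) X] : Prop :=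
  ∃ f : X →+ X, IsRelEndo O Q X f ∧ relTrace O Q X f = AddMonoidHom.id X

/-- `Q` is a vertex of the `OΓ`-module `X` if `X` is relatively `Q`-projective and `Q` is
minimal with this property. -/
noncomputable def IsVertex [Finite Gam] (Q : Subgroup Gam) (X : Type u) [AddCommMonoid X]
    [Module (MonoidAlgebra O Gam) X] : Prop :=
  IsRelativelyProjective O Q X ∧
    ∀ Q' : Subgroup Gam, Q' ≤ Q → IsRelativelyProjective O Q' X → Q' = Q

/-- The right `OQ`-module structure on `OΓ` for a subgroup `Q` of `Γ`. -/
noncomputable instance (Q : Subgroup Gam) :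
    Module (MonoidAlgebra O ↥Q)ᵐᵒᵖ (MonoidAlgebra O Gam) :=
  Module.compHom _ (RingHom.op (MonoidAlgebra.mapDomainRingHom O Q.subtype))

lemma opQ_smul_def (Q : Subgroup Gam) (a : (MonoidAlgebra O ↥Q)ᵐᵒᵖ)
    (x : MonoidAlgebra O Gam) :
    a • x = x * (MonoidAlgebra.mapDomainRingHom O Q.subtype a.unop) := rfl

instance (Q : Subgroup Gam) :
    SMulCommClass (MonoidAlgebra O ↥Q)ᵐᵒᵖ (MonoidAlgebra O Gam) (MonoidAlgebra O Gam) where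
  smul_comm a x y := by
    rw [opQ_smul_def, opQ_smul_def, smul_eq_mul, smul_eq_mul, mul_assoc]

/-- The induced module `Ind_Q^Γ V = OΓ ⊗_{OQ} V`. -/
noncomputable abbrev IndMod (Q : Subgroup Gam) (V : Type u) [AddCommGroup V]
    [Module (MonoidAlgebra O ↥Q) V] : Type u :=
  Tensor (MonoidAlgebra O ↥Q) (MonoidAlgebra O Gam) V

/-- A bundled module over the group algebra `OH`, with compatible `O`-module structure. -/
structure QModPack (H : Type u) [Group H] : Type (u + 1) where
  V : Type u
  [acg : AddCommGroup V]
  [mod : Module (MonoidAlgebra O H) V]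
  [omod : Module O V]
  [tower : IsScalarTower O (MonoidAlgebra O H) V]

attribute [instance] QModPack.acg QModPack.mod QModPack.omod QModPack.tower

/-- `(Q, W)` is a vertex-source pair of the `OΓ`-module `X`. -/
noncomputable def IsVertexSourcePair [Finite Gam] (Q : Subgroup Gam) (W : QModPack O ↥Q)
    (X : Type u) [AddCommMonoid X] [Module (MonoidAlgebra O Gam) X] : Prop :=
  IsVertex O Q X ∧ IsIndecomposableModule (MonoidAlgebra O ↥Q) W.V ∧
    IsDirectSummand (MonoidAlgebra O Gam) (IndMod O Q W.V) X

/-- The action of a group element as an `O`-linear endomorphism. -/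
def gEnd {H : Type u} [Group H] (V : Type u) [AddCommGroup V] [Module (MonoidAlgebra O H) V]
    [Module O V] [IsScalarTower O (MonoidAlgebra O H) V] (h : H) : V →ₗ[O] V where
  toFun v := MonoidAlgebra.of O H h • v
  map_add' := smul_add _
  map_smul' r v := by simp only [RingHom.id_apply]; exact algebra_smul_comm r _ v

/-- A source `W` is an endopermutation module: it is a finitely generated free `O`-module such
that `End_O(W)` has an `O`-basis permuted by the conjugation action of the group. -/
noncomputable def IsEndopermutation {H : Type u} [Group H] (W : QModPack O H) : Prop :=
  Module.Free O W.V ∧ Module.Finite O W.V ∧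
  ∃ (I : Type u) (bas : Module.Basis I O (Module.End O W.V)), ∀ (h : H) (i : I), ∃ j : I,
    (gEnd O W.V h) ∘ₗ (bas i) ∘ₗ (gEnd O W.V h⁻¹) = bas j

/-- The `OΓ`-module `X` has an endopermutation source. -/
noncomputable def HasEndopermutationSource (Gam : Type u) [Group Gam] [Finite Gam]
    (X : Type u) [AddCommMonoid X] [Module (MonoidAlgebra O Gam) X] : Prop :=
  ∃ (Q : Subgroup Gam) (W : QModPack O ↥Q), IsVertexSourcePair O Q W X ∧
    IsEndopermutation O W

/-- The `OΓ`-module `X` has a linear source (a source of `O`-rank 1). -/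
noncomputable def HasLinearSource (Gam : Type u) [Group Gam] [Finite Gam]
    (X : Type u) [AddCommMonoid X] [Module (MonoidAlgebra O Gam) X] : Prop :=
  ∃ (Q : Subgroup Gam) (W : QModPack O ↥Q), IsVertexSourcePair O Q W X ∧
    Module.Free O W.V ∧ Module.rank O W.V = 1

/-- The `OΓ`-module `X` has a trivial source. -/
noncomputable def HasTrivialSource (Gam : Type u) [Group Gam] [Finite Gam]
    (X : Type u) [AddCommMonoid X] [Module (MonoidAlgebra O Gam) X] : Prop :=
  ∃ (Q : Subgroup Gam) (W : QModPack O ↥Q), IsVertexSourcePair O Q W X ∧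
    ∃ e : W.V ≃ₗ[O] O, ∀ (q : ↥Q) (v : W.V), e (MonoidAlgebra.of O ↥Q q • v) = e v

end Vertices

/-! ## Blocks, block bimodules, defect groups -/

section Blocks

variable (O : Type u) [CommRing O] (G : Type u) [Group G]

/-- `b` is a block idempotent of `OG`: a nonzero central idempotent which is primitive in the
centre of `OG`. -/
def IsBlockIdem (b : GA O G) : Prop :=
  b * b = b ∧ b ≠ 0 ∧ (∀ x, b * x = x * b) ∧
    ∀ c d : GA O G, c * c = c → d * d = d → (∀ x, c * x = x * c) → (∀ x, d * x = x * d) →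
      c * d = 0 → b = c + d → c = 0 ∨ d = 0

/-- Class recording that an element of the group algebra is central. -/
class CentralElem (b : GA O G) : Prop where
  comm : ∀ x, b * x = x * b

/-- The block algebra `OGb` as a right submodule of `OG`. -/
def blockSub (b : GA O G) : Submodule (GA O G)ᵐᵒᵖ (GA O G) where
  carrier := {x | b * x = x}
  add_mem' := by
    intro x y hx hy
    show b * _ = _
    rw [mul_add, hx, hy]
  zero_mem' := by show b * 0 = 0; rw [mul_zero]
  smul_mem' := by
    intro a x hx
    show b * (x * a.unop) = x * a.unop
    rw [← mul_assoc, hx]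

/-- The block algebra `B = OGb`, as an `OG`-`OG`-bimodule. -/
def BlockMod (b : GA O G) : Type u := ↥(blockSub O G b)

instance (b : GA O G) : AddCommGroup (BlockMod O G b) :=
  inferInstanceAs (AddCommGroup ↥(blockSub O G b))

instance (b : GA O G) : Module (GA O G)ᵐᵒᵖ (BlockMod O G b) :=
  inferInstanceAs (Module (GA O G)ᵐᵒᵖ ↥(blockSub O G b))

instance (b : GA O G) [CentralElem O G b] : Module (GA O G) (BlockMod O G b) where
  smul a x := ⟨a * x.1, by
    show b * _ = _
    rw [← mul_assoc, CentralElem.comm (b := b) a, mul_assoc, x.2]⟩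
  one_smul x := Subtype.ext (one_mul x.1)
  mul_smul a c x := Subtype.ext (mul_assoc a c x.1)
  smul_zero a := Subtype.ext (mul_zero a)
  smul_add a x y := Subtype.ext (mul_add a x.1 y.1)
  add_smul a c x := Subtype.ext (add_mul a c x.1)
  zero_smul x := Subtype.ext (zero_mul x.1)

lemma blockMod_lsmul_def (b : GA O G) [CentralElem O G b] (a : GA O G)
    (x : BlockMod O G b) : (a • x).1 = a * x.1 := rfl

lemma blockMod_rsmul_def (b : GA O G) (a : (GA O G)ᵐᵒᵖ) (x : BlockMod O G b) :
    (a • x).1 = x.1 * a.unop := rfl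

instance (b : GA O G) [CentralElem O G b] :
    SMulCommClass (GA O G) (GA O G)ᵐᵒᵖ (BlockMod O G b) where
  smul_comm a c x := by
    apply Subtype.ext
    rw [blockMod_lsmul_def, blockMod_rsmul_def, blockMod_rsmul_def, blockMod_lsmul_def,
      mul_assoc]

instance (b : GA O G) [CentralElem O G b] :
    SMulCommClass (GA O G)ᵐᵒᵖ (GA O G) (BlockMod O G b) :=
  SMulCommClass.symm _ _ _

instance (b : GA O G) [CentralElem O G b] : Module O (BlockMod O G b) :=
  Module.compHom _ (algebraMap O (GA O G))

lemma blockMod_osmul_def (b : GA O G) [CentralElem O G b] (r : O) (x : BlockMod O G b) :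
    (r • x).1 = algebraMap O (GA O G) r * x.1 := rfl

instance (b : GA O G) [CentralElem O G b] :
    IsScalarTower O (GA O G) (BlockMod O G b) where
  smul_assoc r a x := by
    apply Subtype.ext
    rw [blockMod_lsmul_def, blockMod_osmul_def, blockMod_lsmul_def, ← mul_assoc,
      ← Algebra.smul_def]

instance (b : GA O G) [CentralElem O G b] : OCentralBimodule O G (BlockMod O G b) where
  right_compat r x := by
    apply Subtype.ext
    rw [blockMod_rsmul_def, blockMod_osmul_def, MulOpposite.unop_op, ← Algebra.commutes]

/-- A bimodule over the group algebra `OG` with compatible `O`-structure, bundled. -/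
structure GBimodPack : Type (u + 1) where
  V : Type u
  [acg : AddCommGroup V]
  [lmod : Module (GA O G) V]
  [rmod : Module (GA O G)ᵐᵒᵖ V]
  [comm : SMulCommClass (GA O G) (GA O G)ᵐᵒᵖ V]
  [comm' : SMulCommClass (GA O G)ᵐᵒᵖ (GA O G) V]
  [omod : Module O V]
  [tower : IsScalarTower O (GA O G) V]
  [ocentral : OCentralBimodule O G V]
  [ocomm : SMulCommClass (GA O G)ᵐᵒᵖ O V]

attribute [instance] GBimodPack.acg GBimodPack.lmod GBimodPack.rmod GBimodPack.comm
  GBimodPack.comm' GBimodPack.omod GBimodPack.tower GBimodPack.ocentral GBimodPack.ocomm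

/-- The tensor product over the block algebra of two unital `O`-central bimodules is again
`O`-central. -/
instance (M N : Type u) [AddCommGroup M] [AddCommGroup N]
    [Module (GA O G) M] [Module (GA O G)ᵐᵒᵖ M] [SMulCommClass (GA O G)ᵐᵒᵖ (GA O G) M]
    [Module O M] [SMulCommClass (GA O G)ᵐᵒᵖ O M] [OCentralBimodule O G M]
    [Module (GA O G) N] [Module (GA O G)ᵐᵒᵖ N] [SMulCommClass (GA O G) (GA O G)ᵐᵒᵖ N]
    [Module O N] [IsScalarTower O (GA O G) N] [OCentralBimodule O G N] :
    OCentralBimodule O G (Tensor (GA O G) M N) where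
  right_compat r x := by
    obtain ⟨t, rfl⟩ := Tensor.q_surjective _ _ _ x
    rw [Tensor.rsmul_mk, Tensor.lsmul_mk]
    congr 0
    induction t with
    | zero => simp only [map_zero]
    | tmul m n =>
      simp only [LinearMap.lTensor_tmul, LinearMap.rTensor_tmul,
        AddMonoidHom.coe_toIntLinearMap, DistribSMul.toAddMonoidHom_apply]
      rw [OCentralBimodule.right_compat (G := G) r n, ← algebraMap_smul (GA O G) r n,
        Tensor.mk_balance, OCentralBimodule.right_compat (G := G) r m]
    | add y z hy hz =>
      simp only [map_add, Tensor.q_add, hy, hz]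

/-- The bimodule `M` is unital over the block determined by `b`, i.e. `b` acts as identity on
both sides; such bimodules are exactly the `B`-`B`-bimodules for `B = OGb`. -/
def IsBlockBimod (b : GA O G) (M : Type u) [AddCommGroup M] [Module (GA O G) M]
    [Module (GA O G)ᵐᵒᵖ M] : Prop :=
  (∀ m : M, b • m = m) ∧ ∀ m : M, MulOpposite.op b • m = m

/-- `M` is an invertible `B`-`B`-bimodule for the block algebra `B = OGb`: it is unital over
the block, finitely generated projective on both sides, and has a tensor inverse `N` with
`M ⊗_B N ≅ B ≅ N ⊗_B M`. (For unital bimodules, tensoring over `OG` agrees with tensoring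
over `B`.) -/
def IsInvertibleBlockBimod (b : GA O G) [CentralElem O G b] (M : Type u) [AddCommGroup M]
    [Module (GA O G) M] [Module (GA O G)ᵐᵒᵖ M] [SMulCommClass (GA O G) (GA O G)ᵐᵒᵖ M]
    [SMulCommClass (GA O G)ᵐᵒᵖ (GA O G) M] : Prop :=
  IsBlockBimod O G b M ∧
  Module.Finite (GA O G) M ∧ Module.Projective (GA O G) M ∧
  Module.Finite (GA O G)ᵐᵒᵖ M ∧ Module.Projective (GA O G)ᵐᵒᵖ M ∧
  ∃ N : GBimodPack O G, IsBlockBimod O G b N.V ∧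
    BimodIsoNonempty (GA O G) (GA O G) (Tensor (GA O G) M N.V) (BlockMod O G b) ∧
    BimodIsoNonempty (GA O G) (GA O G) (Tensor (GA O G) N.V M) (BlockMod O G b)

/-- The diagonal copy of a subgroup `P ≤ G` inside `G × G`. -/
def diagSub (P : Subgroup G) : Subgroup (G × G) :=
  P.map ((MonoidHom.id G).prod (MonoidHom.id G))

/-- `P` is a defect group of the block `b`: the diagonal subgroup `ΔP` is a vertex of the
block algebra `B = OGb` regarded as an `O(G × G)`-module. -/
noncomputable def IsDefectGroup [Finite G] (P : Subgroup G) (b : GA O G)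
    [CentralElem O G b] : Prop :=
  IsBlockIdem O G b ∧ IsVertex O (diagSub G P) (DiagMod O G (BlockMod O G b))

end Blocks
/-! ## Corner rings `eRe` and source algebras -/

section Corner

variable {R : Type u} [Ring R]

/-- An idempotent element of a ring, bundled with the proof of idempotency. -/
structure Idem (R : Type u) [Ring R] : Type u where
  val : R
  idem : val * val = val

/-- The additive subgroup underlying the corner ring `eRe`. -/
def cornerAddSubgroup (e : Idem R) : AddSubgroup R where
  carrier := {x | e.val * x = x ∧ x * e.val = x}
  add_mem' := by
    rintro x y ⟨hx1, hx2⟩ ⟨hy1, hy2⟩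
    constructor
    · rw [mul_add, hx1, hy1]
    · rw [add_mul, hx2, hy2]
  zero_mem' := by constructor <;> simp
  neg_mem' := by
    rintro x ⟨hx1, hx2⟩
    constructor
    · rw [mul_neg, hx1]
    · rw [neg_mul, hx2]

/-- The corner ring `eRe` of an idempotent `e`, a unital ring with unit `e`. -/
def Corner (e : Idem R) : Type u := ↥(cornerAddSubgroup e)

namespace Corner

variable (e : Idem R)

instance : AddCommGroup (Corner e) :=
  inferInstanceAs (AddCommGroup ↥(cornerAddSubgroup e))

instance : Ring (Corner e) :=
  { (inferInstance : AddCommGroup (Corner e)) with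
    mul := fun x y => ⟨x.1 * y.1, by
      constructor
      · rw [← mul_assoc, x.2.1]
      · rw [mul_assoc, y.2.2]⟩
    one := ⟨e.val, e.idem, e.idem⟩
    mul_assoc := fun x y z => Subtype.ext (mul_assoc x.1 y.1 z.1)
    one_mul := fun x => Subtype.ext x.2.1
    mul_one := fun x => Subtype.ext x.2.2
    left_distrib := fun x y z => Subtype.ext (mul_add x.1 y.1 z.1)
    right_distrib := fun x y z => Subtype.ext (add_mul x.1 y.1 z.1)
    zero_mul := fun x => Subtype.ext (zero_mul x.1)
    mul_zero := fun x => Subtype.ext (mul_zero x.1) }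

@[simp] lemma mul_val (x y : Corner e) : (x * y).1 = x.1 * y.1 := rfl

@[simp] lemma one_val : (1 : Corner e).1 = e.val := rfl

@[simp] lemma add_val (x y : Corner e) : (x + y).1 = x.1 + y.1 := rfl

variable {O : Type u} [CommRing O] [Algebra O R]

instance : Module O (Corner e) where
  smul r x := ⟨r • x.1, by
    constructor
    · rw [mul_smul_comm, x.2.1]
    · rw [smul_mul_assoc, x.2.2]⟩
  one_smul x := Subtype.ext (one_smul O x.1)
  mul_smul r s x := Subtype.ext (mul_smul r s x.1)
  smul_zero r := Subtype.ext (smul_zero r)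
  smul_add r x y := Subtype.ext (smul_add r x.1 y.1)
  add_smul r s x := Subtype.ext (add_smul r s x.1)
  zero_smul x := Subtype.ext (zero_smul O x.1)

@[simp] lemma smul_val (r : O) (x : Corner e) : (r • x).1 = r • x.1 := rfl

instance : Algebra O (Corner e) where
  algebraMap :=
  { toFun r := ⟨r • e.val, by
      constructor
      · rw [mul_smul_comm, e.idem]
      · rw [smul_mul_assoc, e.idem]⟩
    map_one' := Subtype.ext (one_smul O e.val)
    map_mul' r s := Subtype.ext <| by
      show (r * s) • e.val = (r • e.val) * (s • e.val)
      rw [smul_mul_assoc, mul_smul_comm, e.idem, mul_smul]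
    map_zero' := Subtype.ext (zero_smul O e.val)
    map_add' r s := Subtype.ext (add_smul r s e.val) }
  commutes' r x := Subtype.ext <| by
    show (r • e.val) * x.1 = x.1 * (r • e.val)
    rw [smul_mul_assoc, mul_smul_comm, x.2.1, x.2.2]
  smul_def' r x := Subtype.ext <| by
    show r • x.1 = (r • e.val) * x.1
    rw [smul_mul_assoc, x.2.1]

end Corner

end Corner

section SourceAlgebra

variable (O : Type u) [CommRing O] (k : Type u) [Field k] (G : Type u) [Group G]

/-- Nonvanishing of the Brauer quotient `Br_P(x)` of a `P`-fixed element `x` of `OG`: some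
coefficient of `x` at an element of `C_G(P)` is nonzero in the residue field `k`. -/
def BrauerNonzero (κ : O →+* k) (P : Subgroup G) (x : GA O G) : Prop :=
  ∃ g ∈ Subgroup.centralizer (P : Set G), κ (x.coeff g) ≠ 0

/-- A source idempotent for the block `b` with defect group `P`: a primitive idempotent `i`
of `B^P = (OGb)^P` with `Br_P(i) ≠ 0`. -/
structure SourceIdemData (κ : O →+* k) (P : Subgroup G) (b : GA O G) : Type u where
  i : GA O G
  idem : i * i = i
  mem : b * i = i
  fixes : ∀ u ∈ P, MonoidAlgebra.of O G u * i = i * MonoidAlgebra.of O G u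
  ne_zero : i ≠ 0
  primitive : ∀ c d : GA O G,
    (b * c = c ∧ ∀ u ∈ P, MonoidAlgebra.of O G u * c = c * MonoidAlgebra.of O G u) →
    (b * d = d ∧ ∀ u ∈ P, MonoidAlgebra.of O G u * d = d * MonoidAlgebra.of O G u) →
    c * c = c → d * d = d → c * d = 0 → d * c = 0 → i = c + d → c = 0 ∨ d = 0
  brauer : BrauerNonzero O k G κ P i

variable {O k G}

/-- The source algebra `A = iBi = i(OG)i` attached to a source idempotent. -/
def SourceIdemData.A {κ : O →+* k} {P : Subgroup G} {b : GA O G}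
    (D : SourceIdemData O k G κ P b) : Type u :=
  Corner (R := GA O G) ⟨D.i, D.idem⟩

instance {κ : O →+* k} {P : Subgroup G} {b : GA O G} (D : SourceIdemData O k G κ P b) :
    Ring D.A := inferInstanceAs (Ring (Corner ⟨D.i, D.idem⟩))

instance {κ : O →+* k} {P : Subgroup G} {b : GA O G} (D : SourceIdemData O k G κ P b) :
    Algebra O D.A := inferInstanceAs (Algebra O (Corner ⟨D.i, D.idem⟩))

/-- The structural map `P → A^×` of the source algebra as an interior `P`-algebra,
`u ↦ i u i = u i`. -/
def SourceIdemData.pUnit {κ : O →+* k} {P : Subgroup G} {b : GA O G}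
    (D : SourceIdemData O k G κ P b) : ↥P →* D.A where
  toFun u := ⟨MonoidAlgebra.of O G (u : G) * D.i, by
    constructor
    · rw [← mul_assoc, ← D.fixes u.1 u.2, mul_assoc, D.idem]
    · rw [mul_assoc, D.idem]⟩
  map_one' := Subtype.ext <| by
    show MonoidAlgebra.of O G ((1 : ↥P) : G) * D.i = D.i
    rw [OneMemClass.coe_one, map_one, one_mul]
  map_mul' u v := Subtype.ext <| by
    show MonoidAlgebra.of O G ((u * v : ↥P) : G) * D.i =
      (MonoidAlgebra.of O G (u : G) * D.i) * (MonoidAlgebra.of O G (v : G) * D.i)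
    rw [mul_assoc (MonoidAlgebra.of O G (u : G)) D.i,
      ← mul_assoc D.i (MonoidAlgebra.of O G (v : G)) D.i,
      ← D.fixes (v : G) v.2, mul_assoc (MonoidAlgebra.of O G (v : G)) D.i D.i, D.idem,
      Subgroup.coe_mul, map_mul, mul_assoc]

end SourceAlgebra
/-! ## The source algebra as an interior `P`-algebra; fusion -/

section SourceAlgebraTwo

variable {O k : Type u} [CommRing O] [Field k] {G : Type u} [Group G]
variable {κ : O →+* k} {P : Subgroup G} {b : GA O G}

/-- The algebra map `OP → A` induced by the structural map `P → A^×`. -/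
noncomputable def SourceIdemData.pAlgHom (D : SourceIdemData O k G κ P b) :
    MonoidAlgebra O ↥P →ₐ[O] D.A :=
  (MonoidAlgebra.lift O D.A ↥P) D.pUnit

/-- The left `OP`-module structure of the source algebra. -/
noncomputable instance (D : SourceIdemData O k G κ P b) :
    Module (MonoidAlgebra O ↥P) D.A :=
  Module.compHom D.A D.pAlgHom.toRingHom

lemma SourceIdemData.lsmul_def (D : SourceIdemData O k G κ P b)
    (a : MonoidAlgebra O ↥P) (x : D.A) : a • x = D.pAlgHom a * x := rfl

/-- The right `OP`-module structure of the source algebra. -/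
noncomputable instance (D : SourceIdemData O k G κ P b) :
    Module (MonoidAlgebra O ↥P)ᵐᵒᵖ D.A :=
  Module.compHom D.A (RingHom.op D.pAlgHom.toRingHom)

lemma SourceIdemData.rsmul_def (D : SourceIdemData O k G κ P b)
    (a : (MonoidAlgebra O ↥P)ᵐᵒᵖ) (x : D.A) : a • x = x * D.pAlgHom a.unop := rfl

instance (D : SourceIdemData O k G κ P b) :
    SMulCommClass (MonoidAlgebra O ↥P) (MonoidAlgebra O ↥P)ᵐᵒᵖ D.A where
  smul_comm a c x := by
    rw [D.lsmul_def, D.rsmul_def, D.rsmul_def, D.lsmul_def, mul_assoc]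

instance (D : SourceIdemData O k G κ P b) :
    SMulCommClass (MonoidAlgebra O ↥P)ᵐᵒᵖ (MonoidAlgebra O ↥P) D.A :=
  SMulCommClass.symm _ _ _

instance (D : SourceIdemData O k G κ P b) :
    IsScalarTower O (MonoidAlgebra O ↥P) D.A where
  smul_assoc r a x := by
    rw [D.lsmul_def, D.lsmul_def, map_smul, smul_mul_assoc]

instance (D : SourceIdemData O k G κ P b) : OCentralBimodule O ↥P D.A where
  right_compat r x := by
    rw [D.rsmul_def, MulOpposite.unop_op, AlgHom.commutes, ← Algebra.commutes,
      ← Algebra.smul_def]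

instance (D : SourceIdemData O k G κ P b) :
    SMulCommClass (MonoidAlgebra O ↥P)ᵐᵒᵖ O D.A where
  smul_comm c r x := by
    rw [D.rsmul_def, D.rsmul_def, smul_mul_assoc]

instance (D : SourceIdemData O k G κ P b) :
    SMulCommClass (MonoidAlgebra O ↥P) D.Aᵐᵒᵖ D.A where
  smul_comm a c x := by
    rw [D.lsmul_def, D.lsmul_def]
    show D.pAlgHom a * (x * c.unop) = (D.pAlgHom a * x) * c.unop
    rw [mul_assoc]

/-- `ψ ∈ Aut_F(P)`, characterised on the source algebra: `A ≅ A_ψ` as `A`-`OP`-bimodules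
(Linckelmann, Theorem 8.7.4). -/
def SourceIdemData.FusesAut (D : SourceIdemData O k G κ P b) (ψ : ↥P ≃* ↥P) : Prop :=
  ∃ e : D.A ≃+ D.A, (∀ a x : D.A, e (a * x) = a * e x) ∧
    ∀ (x : D.A) (u : ↥P), e (x * D.pUnit u) = e x * D.pUnit (ψ u)

/-- `φ ∈ Aut(P, F)`: `φ` stabilises the fusion system `F` of the block determined by the
source algebra, characterised on the source algebra: `A ≅ _φA_φ` as `OP`-`OP`-bimodules. -/
def SourceIdemData.StabilizesFusion (D : SourceIdemData O k G κ P b)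
    (φ : ↥P ≃* ↥P) : Prop :=
  ∃ e : D.A ≃+ D.A, (∀ (r : O) (x : D.A), e (r • x) = r • e x) ∧
    (∀ (u : ↥P) (x : D.A), e (D.pUnit u * x) = D.pUnit (φ u) * e x) ∧
    ∀ (x : D.A) (u : ↥P), e (x * D.pUnit u) = e x * D.pUnit (φ u)

/-- Equality of the classes of `φ, φ'` in `Out(P, F) = Aut(P, F)/Aut_F(P)`. -/
def SourceIdemData.OutPFEq (D : SourceIdemData O k G κ P b)
    (φ φ' : ↥P ≃* ↥P) : Prop :=
  ∃ ψ : ↥P ≃* ↥P, D.FusesAut ψ ∧ ∀ u : ↥P, φ' u = φ (ψ u)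

/-- A bundled `A`-`A`-bimodule over the source algebra. -/
structure ABimodPack (D : SourceIdemData O k G κ P b) : Type (u + 1) where
  V : Type u
  [acg : AddCommGroup V]
  [lmod : Module D.A V]
  [rmod : Module D.Aᵐᵒᵖ V]
  [comm : SMulCommClass D.A D.Aᵐᵒᵖ V]
  [comm' : SMulCommClass D.Aᵐᵒᵖ D.A V]

attribute [instance] ABimodPack.acg ABimodPack.lmod ABimodPack.rmod ABimodPack.comm
  ABimodPack.comm'

/-- `M` represents an element of `T(A)`, the subgroup of `Pic(A)` corresponding to the
trivial source Picard group `T(B)` under the Morita equivalence `X ↦ iXi` between `B` and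
the source algebra `A`: `M` is isomorphic to `iXi` for some trivial source invertible
`B`-`B`-bimodule `X`. -/
noncomputable def SourceIdemData.RepresentsTA [Finite G] [CentralElem O G b]
    (D : SourceIdemData O k G κ P b) (M : Type u) [AddCommGroup M] [Module D.A M]
    [Module D.Aᵐᵒᵖ M] : Prop :=
  ∃ X : GBimodPack O G, IsInvertibleBlockBimod O G b X.V ∧
    HasTrivialSource O (G × G) (DiagMod O G X.V) ∧
    ∃ e : M →+ X.V, Function.Injective e ∧
      (∀ m : M, D.i • e m = e m ∧ MulOpposite.op D.i • e m = e m) ∧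
      (∀ x : X.V, D.i • x = x → MulOpposite.op D.i • x = x → x ∈ Set.range e) ∧
      (∀ (a : D.A) (m : M), e (a • m) = a.1 • e m) ∧
      (∀ (a : D.A) (m : M), e (MulOpposite.op a • m) = MulOpposite.op a.1 • e m)

/-- The `A`-`OP`-bimodule `A_φ` for an automorphism `φ` of `P`: the source algebra with
right `P`-action twisted by `φ`. -/
@[nolint unusedArguments]
def SourceIdemData.Atw (D : SourceIdemData O k G κ P b) (_φ : ↥P ≃* ↥P) : Type u := D.A

namespace SourceIdemData

variable (D : SourceIdemData O k G κ P b) (φ : ↥P ≃* ↥P)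

/-- The underlying element of the source algebra. -/
def Atw.un (x : D.Atw φ) : D.A := x

instance : AddCommGroup (D.Atw φ) := inferInstanceAs (AddCommGroup D.A)

instance : Module D.A (D.Atw φ) := inferInstanceAs (Module D.A D.A)

/-- The twisted right `OP`-action on `A_φ`. -/
noncomputable instance : Module (MonoidAlgebra O ↥P)ᵐᵒᵖ (D.Atw φ) :=
  Module.compHom D.A (RingHom.op ((MonoidAlgebra.lift O D.A ↥P)
    (D.pUnit.comp φ.toMonoidHom)).toRingHom)

lemma Atw_rsmul_def (a : (MonoidAlgebra O ↥P)ᵐᵒᵖ) (x : D.Atw φ) :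
    a • x = Atw.un D φ x *
      ((MonoidAlgebra.lift O D.A ↥P) (D.pUnit.comp φ.toMonoidHom)) a.unop := rfl

instance : SMulCommClass (MonoidAlgebra O ↥P)ᵐᵒᵖ D.A (D.Atw φ) where
  smul_comm c a x := by
    show (((RingHom.op ((MonoidAlgebra.lift O D.A ↥P)
        (D.pUnit.comp φ.toMonoidHom)).toRingHom) c) • (a * Atw.un D φ x) : D.A) =
      a * (((RingHom.op ((MonoidAlgebra.lift O D.A ↥P)
        (D.pUnit.comp φ.toMonoidHom)).toRingHom) c) • Atw.un D φ x : D.A)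
    rw [MulOpposite.smul_eq_mul_unop, MulOpposite.smul_eq_mul_unop, mul_assoc]

/-- The `A`-`A`-bimodule `A_φ ⊗_{OP} A`. -/
noncomputable def AtwTensorA : Type u :=
  Tensor (MonoidAlgebra O ↥P) (D.Atw φ) D.A

noncomputable instance : AddCommGroup (D.AtwTensorA φ) :=
  inferInstanceAs (AddCommGroup (Tensor (MonoidAlgebra O ↥P) (D.Atw φ) D.A))

noncomputable instance : Module D.A (D.AtwTensorA φ) :=
  inferInstanceAs (Module D.A (Tensor (MonoidAlgebra O ↥P) (D.Atw φ) D.A))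

noncomputable instance : Module D.Aᵐᵒᵖ (D.AtwTensorA φ) :=
  inferInstanceAs (Module D.Aᵐᵒᵖ (Tensor (MonoidAlgebra O ↥P) (D.Atw φ) D.A))

end SourceIdemData

end SourceAlgebraTwo
/-! ## Puig's embedding of the Brauer correspondent source algebra -/

section Puig

variable (O k : Type u) [CommRing O] [Field k] (G : Type u) [Group G] [Finite G]
variable (κ : O →+* k) (P : Subgroup G) (b : GA O G)

/-- A twisted diagonal subgroup `Δ(ψ, R) = {(ψ r, r) | r ∈ R}` of `P × P` of order `< |P|`. -/
def IsSmallTwistedDiagonal (Q : Subgroup (↥P × ↥P)) : Prop :=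
  ∃ (R : Subgroup ↥P) (ψ : ↥R →* ↥P), Function.Injective ψ ∧
    Q = (ψ.prod R.subtype).range ∧ Nat.card ↥R < Nat.card ↥P

variable [CentralElem O G b]

set_option maxHeartbeats 1000000 in
set_option synthInstance.maxHeartbeats 400000 in
/-- Data recording Puig's canonical embedding `L → A` of a source algebra
`L ≅ O_τ(P ⋊ E)` of the Brauer correspondent of `b` into the source algebra `A = iBi`,
together with its characteristic properties: `L` contains the image of `P`, `L` has an
`O`-basis indexed by `P ⋊ E` (with `E` the inertial quotient, a `p′`-group acting on `P`)
whose multiplication is twisted by a 2-cocycle `τ` on `E`, the embedding is split as a map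
of `L`-`L`-bimodules (with complement `compl`), and the complement is relatively projective,
as an `O(P × P)`-module, with respect to twisted diagonal subgroups of `P × P` of order
strictly smaller than `|P|` (Puig; cf. Proposition 2.6 of the paper). -/
structure PuigEmbedData (p : ℕ) : Type (u + 1) where
  D : SourceIdemData O k G κ P b
  E : Type u
  [grpE : Group E]
  [finE : Fintype E]
  ord_coprime : ¬ p ∣ Nat.card E
  act : E →* MulAut ↥P
  τ : E → E → Oˣ
  cocycle : ∀ x y z : E, τ x y * τ (x * y) z = τ y z * τ x (y * z)
  τ_one : ∀ x : E, τ 1 x = 1 ∧ τ x 1 = 1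
  L : Subalgebra O D.A
  punit_mem : ∀ u : ↥P, D.pUnit u ∈ L
  bas : ↥P × E → D.A
  bas_mem : ∀ w : ↥P × E, bas w ∈ L
  bas_one : ∀ u : ↥P, bas (u, 1) = D.pUnit u
  bas_mul : ∀ (u v : ↥P) (x y : E),
    bas (u, x) * bas (v, y) = (τ x y : O) • bas (u * act x v, x * y)
  bas_indep : LinearIndependent O bas
  bas_span : ∀ l : D.A, l ∈ L → l ∈ Submodule.span O (Set.range bas)
  compl : Submodule O D.A
  compl_inf : Subalgebra.toSubmodule L ⊓ compl = ⊥
  compl_sup : Subalgebra.toSubmodule L ⊔ compl = ⊤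
  compl_stable : ∀ l ∈ L, ∀ a ∈ compl, l * a ∈ compl ∧ a * l ∈ compl
  compl_small : ∃ (n : ℕ) (Qf : Fin n → Subgroup (↥P × ↥P)),
    (∀ i, IsSmallTwistedDiagonal G P (Qf i)) ∧
    ∃ θ : Fin n → (DiagMod O ↥P D.A →+ DiagMod O ↥P D.A),
      (∀ i, IsRelEndo O (Qf i) (DiagMod O ↥P D.A) (θ i)) ∧
      (∀ i, ∀ a : D.A, a ∈ compl → (show D.A from θ i a) ∈ compl) ∧
      ∀ a : D.A, a ∈ compl →
        (show D.A from (∑ i, relTrace O (Qf i) (DiagMod O ↥P D.A) (θ i)) a) = a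

attribute [instance] PuigEmbedData.grpE PuigEmbedData.finE

end Puig

/-- The `k`-algebra `A` is split: the only `A`-endomorphisms of a simple `A`-module are the
scalars from `k`. -/
def IsSplitAlgebra (k A : Type u) [Field k] [Ring A] [Algebra k A] : Prop :=
  ∀ (S : Type u) [AddCommGroup S] [Module A S] [Module k S] [IsScalarTower k A S],
    IsSimpleModule A S → ∀ φ : S →ₗ[A] S, ∃ c : k, ∀ s : S, φ s = c • s

/-! ## Auxiliary lemmas for Statement 13 -/

section Aux13

universe uu

theorem aux_one_add_smul_isUnit {O : Type uu} [CommRing O] [IsLocalRing O] {A : Type uu}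
    [Ring A] [Algebra O A] [Module.Finite O A] {π : O}
    (hπ : π ∈ IsLocalRing.maximalIdeal O) (a : A) :
    ∃ d : A, (1 + π • a) * d = 1 ∧ d * (1 + π • a) = 1 := by
  set c : A := 1 + π • a with hc
  have key : ∀ (f : A →ₗ[O] A), (∀ x : A, ∃ y z : A, f y = x + π • z) →
      Function.Surjective f := by
    intro f hf
    have htop : (⊤ : Submodule O A) ≤ LinearMap.range f ⊔
        (IsLocalRing.maximalIdeal O) • (⊤ : Submodule O A) := by
      intro x _
      obtain ⟨y, z, hyz⟩ := hf x
      have hx : x = f y - π • z := by rw [hyz]; abel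
      rw [hx]
      exact Submodule.sub_mem _ (Submodule.mem_sup_left ⟨y, rfl⟩)
        (Submodule.mem_sup_right (Submodule.smul_mem_smul hπ trivial))
    have hjac : IsLocalRing.maximalIdeal O ≤ Ideal.jacobson ⊥ := by
      rw [IsLocalRing.jacobson_eq_maximalIdeal ⊥ bot_ne_top]
    have hsup := Submodule.sup_eq_sup_smul_of_le_smul_of_le_jacobson
      (N := LinearMap.range f) (N' := (⊤ : Submodule O A))
      (Module.Finite.fg_top) hjac htop
    rw [Submodule.bot_smul, sup_bot_eq] at hsup
    have hr : LinearMap.range f = ⊤ := by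
      rw [← hsup]; exact le_antisymm le_top le_sup_right
    exact LinearMap.range_eq_top.mp hr
  have hL : Function.Surjective (LinearMap.mulLeft O c) := by
    apply key
    intro x
    exact ⟨x, a * x, by simp [hc, add_mul, smul_mul_assoc, LinearMap.mulLeft_apply]⟩
  have hR : Function.Surjective (LinearMap.mulRight O c) := by
    apply key
    intro x
    exact ⟨x, x * a, by simp [hc, mul_add, mul_smul_comm, LinearMap.mulRight_apply]⟩
  obtain ⟨d, hd⟩ := hL 1
  obtain ⟨d', hd'⟩ := hR 1
  simp only [LinearMap.mulLeft_apply] at hd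
  simp only [LinearMap.mulRight_apply] at hd'
  have hdd : d' = d := by
    calc d' = d' * (c * d) := by rw [hd, mul_one]
    _ = (d' * c) * d := by rw [mul_assoc]
    _ = d := by rw [hd', one_mul]
  exact ⟨d, hd, hdd ▸ hd'⟩

theorem aux_main {O : Type uu} [CommRing O] [IsLocalRing O] {A : Type uu} [Ring A]
    [Algebra O A] [Module.Finite O A]
    {E : Type*} [Group E] [Fintype E]
    (τ : E → E → Oˣ)
    (hcoc : ∀ x y z : E, τ x y * τ (x * y) z = τ y z * τ x (y * z))
    (hτ1 : ∀ x : E, τ 1 x = 1 ∧ τ x 1 = 1)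
    {Q : Type*} (pU : Q → A)
    (u v : E → A)
    (hu1 : u 1 = 1) (hv1 : v 1 = 1)
    (humul : ∀ x y, u x * u y = ((τ x y : Oˣ) : O) • u (x * y))
    (hvmul : ∀ x y, v x * v y = ((τ x y : Oˣ) : O) • v (x * y))
    (hcompat : ∀ (x : E) (q : Q), ∃ q' : Q,
        pU q * u x = u x * pU q' ∧ pU q' * v x⁻¹ = v x⁻¹ * pU q)
    {π : O} (hπ : π ∈ IsLocalRing.maximalIdeal O)
    (htf : ∀ z : A, π • z = 0 → z = 0)
    (hdiff : ∀ x : E, ∃ a : A, v x - u x = π • a)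
    (hcard : IsUnit ((Fintype.card E : O))) :
    ∃ c d : A, c * d = 1 ∧ d * c = 1 ∧
      (∃ a : A, (∀ q : Q, pU q * a = a * pU q) ∧ c = 1 + π • a) ∧
      (∀ x : E, v x = d * u x * c) ∧ (∀ q : Q, pU q * c = c * pU q) := by
  classical
  have hτsym : ∀ x : E, τ x x⁻¹ = τ x⁻¹ x := by
    intro x
    have h := hcoc x x⁻¹ x
    rw [mul_inv_cancel, inv_mul_cancel, (hτ1 x).1, (hτ1 x).2, mul_one, mul_one] at h
    exact h
  have hUhelp : ∀ a b : Oˣ, (a * b)⁻¹ * a = b⁻¹ := by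
    intro a b
    rw [mul_inv_rev, inv_mul_cancel_right]
  have hin : ∀ y x : E, (y * x)⁻¹ * y = x⁻¹ := by
    intro y x
    rw [mul_inv_rev, inv_mul_cancel_right]
  have hUmain : ∀ y x : E,
      (τ x x⁻¹)⁻¹ * τ y x = (τ (y*x) (y*x)⁻¹)⁻¹ * τ (y*x)⁻¹ y := by
    intro y x
    have hi := hcoc (y*x) (y*x)⁻¹ y
    rw [mul_inv_cancel, (hτ1 y).1, mul_one, hin y x] at hi
    have hii := hcoc y x x⁻¹
    rw [mul_inv_cancel, (hτ1 y).2, mul_one] at hii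
    rw [hi, ← hii, hUhelp, hUhelp]
  have hOmain : ∀ y x : E, (((τ x x⁻¹)⁻¹ : Oˣ) : O) * ((τ y x : Oˣ) : O)
      = (((τ (y*x) (y*x)⁻¹)⁻¹ : Oˣ) : O) * ((τ (y*x)⁻¹ y : Oˣ) : O) := by
    intro y x
    have h := congrArg (Units.val) (hUmain y x)
    simpa using h
  set w : E → A := fun x => (((τ x x⁻¹)⁻¹ : Oˣ) : O) • v x⁻¹ with hw
  have hvw : ∀ x : E, v x * w x = 1 := by
    intro x
    simp only [hw]
    rw [mul_smul_comm, hvmul, smul_smul, mul_inv_cancel, hv1, Units.inv_mul, one_smul]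
  have hwv : ∀ x : E, w x * v x = 1 := by
    intro x
    simp only [hw]
    rw [smul_mul_assoc, hvmul, smul_smul, inv_mul_cancel, hv1, ← hτsym, Units.inv_mul, one_smul]
  have hterm : ∀ y x : E, u y * (u x * w x) = u (y*x) * (w (y*x) * v y) := by
    intro y x
    have hL : u y * (u x * w x)
        = ((((τ x x⁻¹)⁻¹ : Oˣ) : O) * ((τ y x : Oˣ) : O)) • (u (y*x) * v x⁻¹) := by
      simp only [hw]
      rw [mul_smul_comm, mul_smul_comm, ← mul_assoc, humul, smul_mul_assoc, smul_smul]
    have hR : u (y*x) * (w (y*x) * v y)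
        = ((((τ (y*x) (y*x)⁻¹)⁻¹ : Oˣ) : O) * ((τ (y*x)⁻¹ y : Oˣ) : O)) • (u (y*x) * v x⁻¹) := by
      simp only [hw]
      rw [smul_mul_assoc, hvmul, hin y x, mul_smul_comm, mul_smul_comm, smul_smul]
    rw [hL, hR, hOmain y x]
  set S : A := ∑ x : E, u x * w x with hSdef
  have hSint : ∀ y : E, u y * S = S * v y := by
    intro y
    rw [hSdef, Finset.mul_sum, Finset.sum_mul]
    calc ∑ x : E, u y * (u x * w x)
        = ∑ x : E, u (y*x) * (w (y*x) * v y) := Finset.sum_congr rfl (fun x _ => hterm y x)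
      _ = ∑ x : E, u x * (w x * v y) := by
            refine Fintype.sum_equiv (Equiv.mulLeft y) _ _ (fun x => ?_)
            simp [Equiv.coe_mulLeft]
      _ = ∑ x : E, (u x * w x) * v y := Finset.sum_congr rfl (fun x _ => (mul_assoc _ _ _).symm)
  have hPS : ∀ q : Q, pU q * S = S * pU q := by
    intro q
    rw [hSdef, Finset.mul_sum, Finset.sum_mul]
    refine Finset.sum_congr rfl (fun x _ => ?_)
    obtain ⟨q', h1, h2⟩ := hcompat x q
    simp only [hw]
    calc pU q * (u x * ((((τ x x⁻¹)⁻¹ : Oˣ) : O) • v x⁻¹))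
        = (pU q * u x) * ((((τ x x⁻¹)⁻¹ : Oˣ) : O) • v x⁻¹) := (mul_assoc _ _ _).symm
      _ = (u x * pU q') * ((((τ x x⁻¹)⁻¹ : Oˣ) : O) • v x⁻¹) := by rw [h1]
      _ = u x * ((((τ x x⁻¹)⁻¹ : Oˣ) : O) • (pU q' * v x⁻¹)) := by
            rw [mul_assoc, mul_smul_comm]
      _ = u x * ((((τ x x⁻¹)⁻¹ : Oˣ) : O) • (v x⁻¹ * pU q)) := by rw [h2]
      _ = (u x * ((((τ x x⁻¹)⁻¹ : Oˣ) : O) • v x⁻¹)) * pU q := by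
            rw [mul_smul_comm, mul_smul_comm, smul_mul_assoc, mul_assoc]
  have hterm1 : ∀ x : E, ∃ bx : A, u x * w x = 1 + π • bx := by
    intro x
    obtain ⟨ax, hax⟩ := hdiff x⁻¹
    have hvx : v x⁻¹ = u x⁻¹ + π • ax := by
      rw [← hax]; abel
    refine ⟨(((τ x x⁻¹)⁻¹ : Oˣ) : O) • (u x * ax), ?_⟩
    have t1 : u x * ((((τ x x⁻¹)⁻¹ : Oˣ) : O) • u x⁻¹) = 1 := by
      rw [mul_smul_comm, humul, smul_smul, mul_inv_cancel, hu1, Units.inv_mul, one_smul]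
    have t2 : u x * ((((τ x x⁻¹)⁻¹ : Oˣ) : O) • (π • ax))
        = π • ((((τ x x⁻¹)⁻¹ : Oˣ) : O) • (u x * ax)) := by
      rw [mul_smul_comm, mul_smul_comm, smul_comm]
    simp only [hw]
    rw [hvx, smul_add, mul_add, t1, t2]
  choose bfun hbfun using hterm1
  have hScard : S = (Fintype.card E : O) • (1 : A) + π • ∑ x : E, bfun x := by
    rw [hSdef]
    calc ∑ x : E, u x * w x = ∑ x : E, (1 + π • bfun x) :=
          Finset.sum_congr rfl (fun x _ => hbfun x)
      _ = ∑ _x : E, (1:A) + ∑ x : E, π • bfun x := Finset.sum_add_distrib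
      _ = (Fintype.card E : O) • (1:A) + π • ∑ x : E, bfun x := by
          simp [Finset.sum_const, Finset.card_univ, Nat.cast_smul_eq_nsmul, Finset.smul_sum]
  obtain ⟨nu, hnu⟩ := hcard
  set c : A := (((nu⁻¹ : Oˣ) : O)) • S with hcdef
  set aA : A := (((nu⁻¹ : Oˣ) : O)) • ∑ x : E, bfun x with haA
  have hc1 : c = 1 + π • aA := by
    rw [hcdef, haA, hScard, smul_add, smul_smul, ← hnu, Units.inv_mul, one_smul, smul_comm]
  have hcS : ∀ y : E, u y * c = c * v y := by
    intro y
    rw [hcdef, mul_smul_comm, smul_mul_assoc, hSint]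
  have hcP : ∀ q : Q, pU q * c = c * pU q := by
    intro q
    rw [hcdef, mul_smul_comm, smul_mul_assoc, hPS]
  have haP : ∀ q : Q, pU q * aA = aA * pU q := by
    intro q
    have h := hcP q
    rw [hc1] at h
    rw [mul_add, mul_one, add_mul, one_mul, mul_smul_comm, smul_mul_assoc] at h
    have h5 := add_left_cancel h
    have h6 : π • (pU q * aA - aA * pU q) = 0 := by rw [smul_sub, h5, sub_self]
    exact sub_eq_zero.mp (htf _ h6)
  obtain ⟨d, hd1, hd2⟩ := aux_one_add_smul_isUnit hπ aA
  rw [← hc1] at hd1 hd2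
  refine ⟨c, d, hd1, hd2, ⟨aA, haP, hc1⟩, ?_, hcP⟩
  intro x
  calc v x = (d * c) * v x := by rw [hd2, one_mul]
    _ = d * (u x * c) := by rw [mul_assoc, hcS x]
    _ = d * u x * c := by rw [mul_assoc]

/-- The inclusion of a corner ring as an `O`-linear map. -/
def cornerValLM {R : Type uu} [Ring R] {O : Type uu} [CommRing O] [Algebra O R]
    (e : Idem R) : Corner e →ₗ[O] R where
  toFun x := x.1
  map_add' _ _ := rfl
  map_smul' _ _ := rfl

/-- A corner ring of a module-finite algebra over a Noetherian ring is module-finite. -/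
theorem cornerFinite {R : Type uu} [Ring R] {O : Type uu} [CommRing O] [Algebra O R]
    [IsNoetherianRing O] [Module.Finite O R] (e : Idem R) :
    Module.Finite O (Corner e) := by
  haveI : IsNoetherian O (Corner e) :=
    isNoetherian_of_injective (cornerValLM e) (fun x y h => Subtype.ext h)
  exact Module.finite_def.mpr (IsNoetherian.noetherian ⊤)

end Aux13

set_option maxHeartbeats 4000000 in
set_option synthInstance.maxHeartbeats 1000000 in
theorem embedding_conjugate_to_inclusion_aux
    {O k : Type u} [CommRing O] [IsLocalRing O] [CharZero O] [Field k] [Algebra O k]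
    (p : ℕ) [Fact p.Prime] [CharP k p] [PerfectField k]
    (hres : Function.Surjective (algebraMap O k))
    (hdvr : IsDomain O ∧ IsPrincipalIdealRing O ∧ ¬ IsField O ∧
      IsAdicComplete (IsLocalRing.maximalIdeal O) O ∧
      RingHom.ker (algebraMap O k) = IsLocalRing.maximalIdeal O)
    (piO : O) (hpi : IsLocalRing.maximalIdeal O = Ideal.span {piO})
    {G : Type u} [Group G] [Finite G]
    (hsplitG : ∀ H : Subgroup G, IsSplitAlgebra k (MonoidAlgebra k ↥H))
    (b : GA O G) [CentralElem O G b] (P : Subgroup G) (hdef : IsDefectGroup O G P b)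
    (Pd : PuigEmbedData O k G (algebraMap O k) P b p)
    (γ : ↥Pd.L →ₐ[O] Pd.D.A)
    (hγP : ∀ u : ↥P, γ ⟨Pd.D.pUnit u, Pd.punit_mem u⟩ = Pd.D.pUnit u)
    (hγred : ∀ y : ↥Pd.L, ∃ a : Pd.D.A, γ y - (y : Pd.D.A) = piO • a) :
    ∃ c cinv : Pd.D.A, c * cinv = 1 ∧ cinv * c = 1 ∧
      (∃ a : Pd.D.A, (∀ u : ↥P, Pd.D.pUnit u * a = a * Pd.D.pUnit u) ∧ c = 1 + piO • a) ∧
      ∀ y : ↥Pd.L, γ y = cinv * (y : Pd.D.A) * c := by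
  classical
  obtain ⟨hdom, hpir, hnf, -, hker⟩ := hdvr
  haveI : IsDomain O := hdom
  haveI : IsPrincipalIdealRing O := hpir
  -- `piO` is nonzero
  have hpi_ne : piO ≠ 0 := by
    intro h
    exact hnf (IsLocalRing.isField_iff_maximalIdeal_eq.mpr
      (by rw [hpi, h]; exact Ideal.span_singleton_eq_bot.mpr rfl))
  have hpimem : piO ∈ IsLocalRing.maximalIdeal O := by
    rw [hpi]; exact Ideal.mem_span_singleton_self piO
  -- the source algebra is a finitely generated `O`-module
  haveI : Fintype G := Fintype.ofFinite G
  haveI : Module.Finite O (GA O G) := inferInstance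
  haveI : Module.Finite O Pd.D.A := cornerFinite (⟨Pd.D.i, Pd.D.idem⟩ : Idem (GA O G))
  -- the source algebra is `O`-torsion-free
  have htf : ∀ z : Pd.D.A, piO • z = 0 → z = 0 := by
    haveI : Module.IsTorsionFree O (GA O G) := inferInstance
    intro z hz
    have h1 : piO • ((cornerValLM (O := O) (⟨Pd.D.i, Pd.D.idem⟩ : Idem (GA O G))) z) = 0 := by
      erw [← map_smul, hz, map_zero]
    rcases smul_eq_zero.mp h1 with h | h
    · exact absurd h hpi_ne
    · exact Subtype.ext h
  -- the order of the inertial quotient is invertible in `O`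
  have hcard : IsUnit ((Fintype.card Pd.E : O)) := by
    by_contra hcontra
    have hmem : (Fintype.card Pd.E : O) ∈ IsLocalRing.maximalIdeal O :=
      (IsLocalRing.mem_maximalIdeal _).mpr hcontra
    rw [← hker, RingHom.mem_ker] at hmem
    have hzero : ((Fintype.card Pd.E : k)) = 0 := by
      rw [← map_natCast (algebraMap O k)]
      exact hmem
    exact Pd.ord_coprime (by
      rw [Nat.card_eq_fintype_card]
      exact (CharP.cast_eq_zero_iff k p _).mp hzero)
  -- multiplication relations for the canonical basis of `L`
  have h_act_id : ∀ (x : Pd.E) (q : ↥P), Pd.act x (Pd.act x⁻¹ q) = q := by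
    intro x q
    rw [← MulAut.mul_apply, ← map_mul, mul_inv_cancel, map_one, MulAut.one_apply]
  have hu1 : Pd.bas ((1 : ↥P), (1 : Pd.E)) = 1 := by
    rw [Pd.bas_one]; exact map_one Pd.D.pUnit
  have humul : ∀ x y : Pd.E, Pd.bas (1, x) * Pd.bas (1, y)
      = ((Pd.τ x y : Oˣ) : O) • Pd.bas (1, x * y) := by
    intro x y
    have h := Pd.bas_mul 1 1 x y
    simpa only [map_one, MulAut.one_apply, mul_one, one_mul] using h
  have hfac : ∀ (q : ↥P) (x : Pd.E), Pd.bas (q, x) = Pd.D.pUnit q * Pd.bas (1, x) := by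
    intro q x
    have h := Pd.bas_mul q 1 1 x
    rw [(Pd.τ_one x).1] at h
    simp only [map_one, MulAut.one_apply, mul_one, one_mul, Units.val_one, one_smul] at h
    rw [Pd.bas_one q] at h
    exact h.symm
  have huL_mul : ∀ x y : Pd.E,
      (⟨Pd.bas (1,x), Pd.bas_mem _⟩ : ↥Pd.L) * ⟨Pd.bas (1,y), Pd.bas_mem _⟩
      = ((Pd.τ x y : Oˣ) : O) • (⟨Pd.bas (1,(x*y)), Pd.bas_mem _⟩ : ↥Pd.L) := by
    intro x y
    exact Subtype.ext (humul x y)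
  have hv1 : γ ⟨Pd.bas (1,(1 : Pd.E)), Pd.bas_mem _⟩ = 1 := by
    have h1 : (⟨Pd.bas (1,(1 : Pd.E)), Pd.bas_mem _⟩ : ↥Pd.L) = 1 := Subtype.ext hu1
    rw [h1, map_one]
  have hvmul : ∀ x y : Pd.E,
      γ ⟨Pd.bas (1,x), Pd.bas_mem _⟩ * γ ⟨Pd.bas (1,y), Pd.bas_mem _⟩
      = ((Pd.τ x y : Oˣ) : O) • γ ⟨Pd.bas (1,(x*y)), Pd.bas_mem _⟩ := by
    intro x y
    rw [← map_mul, huL_mul, map_smul]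
  have hcomm_u : ∀ (x : Pd.E) (q : ↥P),
      Pd.bas (1,x) * Pd.D.pUnit q = Pd.D.pUnit (Pd.act x q) * Pd.bas (1,x) := by
    intro x q
    have h := Pd.bas_mul 1 q x 1
    rw [(Pd.τ_one x).2] at h
    simp only [Units.val_one, one_smul, one_mul, mul_one] at h
    rw [Pd.bas_one q, hfac (Pd.act x q) x] at h
    exact h
  have hcomm_v : ∀ (x : Pd.E) (q : ↥P),
      γ ⟨Pd.bas (1,x), Pd.bas_mem _⟩ * Pd.D.pUnit q
      = Pd.D.pUnit (Pd.act x q) * γ ⟨Pd.bas (1,x), Pd.bas_mem _⟩ := by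
    intro x q
    have hLlvl : (⟨Pd.bas (1,x), Pd.bas_mem _⟩ : ↥Pd.L) * ⟨Pd.D.pUnit q, Pd.punit_mem q⟩
        = (⟨Pd.D.pUnit (Pd.act x q), Pd.punit_mem _⟩ : ↥Pd.L) * ⟨Pd.bas (1,x), Pd.bas_mem _⟩ :=
      Subtype.ext (hcomm_u x q)
    have h := congrArg γ hLlvl
    rw [map_mul, map_mul, hγP q, hγP (Pd.act x q)] at h
    exact h
  have hcompat : ∀ (x : Pd.E) (q : ↥P), ∃ q' : ↥P,
      Pd.D.pUnit q * Pd.bas (1,x) = Pd.bas (1,x) * Pd.D.pUnit q' ∧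
      Pd.D.pUnit q' * γ ⟨Pd.bas (1,x⁻¹), Pd.bas_mem _⟩
        = γ ⟨Pd.bas (1,x⁻¹), Pd.bas_mem _⟩ * Pd.D.pUnit q := by
    intro x q
    refine ⟨Pd.act x⁻¹ q, ?_, ?_⟩
    · have h := hcomm_u x (Pd.act x⁻¹ q)
      rw [h_act_id x q] at h
      exact h.symm
    · exact (hcomm_v x⁻¹ q).symm
  have hdiff : ∀ x : Pd.E, ∃ a : Pd.D.A,
      γ ⟨Pd.bas (1,x), Pd.bas_mem _⟩ - Pd.bas (1,x) = piO • a := by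
    intro x
    obtain ⟨a, ha⟩ := hγred ⟨Pd.bas (1,x), Pd.bas_mem _⟩
    exact ⟨a, ha⟩
  -- apply the abstract averaging lemma
  obtain ⟨c, d, hcd, hdc, ⟨aA, haP', hc1⟩, hvconj', hcP'⟩ :=
    aux_main Pd.τ Pd.cocycle Pd.τ_one (fun q : ↥P => Pd.D.pUnit q)
      (fun x => Pd.bas (1, x)) (fun x => γ ⟨Pd.bas (1,x), Pd.bas_mem _⟩)
      hu1 hv1 humul hvmul hcompat hpimem htf hdiff hcard
  have haP : ∀ q : ↥P, Pd.D.pUnit q * aA = aA * Pd.D.pUnit q := fun q => haP' q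
  have hvconj : ∀ x : Pd.E, γ ⟨Pd.bas (1,x), Pd.bas_mem _⟩ = d * Pd.bas (1,x) * c :=
    fun x => hvconj' x
  have hcP : ∀ q : ↥P, Pd.D.pUnit q * c = c * Pd.D.pUnit q := fun q => hcP' q
  refine ⟨c, d, hcd, hdc, ⟨aA, haP, hc1⟩, ?_⟩
  -- conjugation identity on the basis elements
  have hdq : ∀ q : ↥P, Pd.D.pUnit q * d = d * Pd.D.pUnit q := by
    intro q
    calc Pd.D.pUnit q * d
        = d * (c * (Pd.D.pUnit q * d)) := by rw [← mul_assoc d c, hdc, one_mul]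
      _ = d * (c * Pd.D.pUnit q * d) := by rw [← mul_assoc c (Pd.D.pUnit q) d]
      _ = d * (Pd.D.pUnit q * c * d) := by rw [← hcP q]
      _ = d * (Pd.D.pUnit q * (c * d)) := by rw [mul_assoc (Pd.D.pUnit q) c d]
      _ = d * Pd.D.pUnit q := by rw [hcd, mul_one]
  have hconj_bas : ∀ wp : ↥P × Pd.E,
      γ ⟨Pd.bas wp, Pd.bas_mem wp⟩ = d * Pd.bas wp * c := by
    intro wp
    obtain ⟨q, x⟩ := wp
    have hfacL : (⟨Pd.bas (q,x), Pd.bas_mem _⟩ : ↥Pd.L)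
        = (⟨Pd.D.pUnit q, Pd.punit_mem q⟩ : ↥Pd.L) * ⟨Pd.bas (1,x), Pd.bas_mem _⟩ :=
      Subtype.ext (hfac q x)
    rw [hfacL, map_mul, hγP q, hvconj x, hfac q x]
    calc Pd.D.pUnit q * (d * Pd.bas (1,x) * c)
        = Pd.D.pUnit q * d * Pd.bas (1,x) * c := by
          rw [← mul_assoc (Pd.D.pUnit q) (d * Pd.bas (1,x)) c,
            ← mul_assoc (Pd.D.pUnit q) d (Pd.bas (1,x))]
      _ = d * Pd.D.pUnit q * Pd.bas (1,x) * c := by rw [hdq q]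
      _ = d * (Pd.D.pUnit q * Pd.bas (1,x)) * c := by rw [mul_assoc d (Pd.D.pUnit q) (Pd.bas (1,x))]
  -- extend to all of `L` by linearity
  intro y
  have hMspan : ∀ yy : ↥Pd.L, yy ∈ Submodule.span O
      (Set.range (fun wp : ↥P × Pd.E => (⟨Pd.bas wp, Pd.bas_mem wp⟩ : ↥Pd.L))) := by
    intro yy
    have h1 : (yy : Pd.D.A) ∈ Submodule.span O (Set.range Pd.bas) := Pd.bas_span yy.1 yy.2
    let valL : ↥Pd.L →ₗ[O] Pd.D.A :=
      { toFun := Subtype.val, map_add' := fun _ _ => rfl, map_smul' := fun _ _ => rfl }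
    have hmap : Submodule.map valL (Submodule.span O
        (Set.range (fun wp : ↥P × Pd.E => (⟨Pd.bas wp, Pd.bas_mem wp⟩ : ↥Pd.L))))
        = Submodule.span O (Set.range Pd.bas) := by
      rw [Submodule.map_span, ← Set.range_comp]
      rfl
    have h2 : (yy : Pd.D.A) ∈ Submodule.map valL (Submodule.span O
        (Set.range (fun wp : ↥P × Pd.E => (⟨Pd.bas wp, Pd.bas_mem wp⟩ : ↥Pd.L)))) := by
      rw [hmap]; exact h1
    obtain ⟨z, hzmem, hzeq⟩ := h2
    have hzy : z = yy := Subtype.ext hzeq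
    rwa [← hzy]
  exact Submodule.span_induction
    (p := fun z _ => γ z = d * (z : Pd.D.A) * c)
    (fun z hzr => by
      obtain ⟨wp, rfl⟩ := hzr
      exact hconj_bas wp)
    (by simp)
    (fun z1 z2 h1 h2 ih1 ih2 => by
      show γ (z1 + z2) = d * ((z1 + z2 : ↥Pd.L) : Pd.D.A) * c
      rw [map_add, ih1, ih2,
        show ((z1+z2 : ↥Pd.L) : Pd.D.A) = (z1 : Pd.D.A) + (z2 : Pd.D.A) from rfl,
        mul_add, add_mul])
    (fun r z hz ih => by
      show γ (r • z) = d * ((r • z : ↥Pd.L) : Pd.D.A) * c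
      rw [map_smul, ih,
        show ((r • z : ↥Pd.L) : Pd.D.A) = r • (z : Pd.D.A) from rfl,
        mul_smul_comm, smul_mul_assoc])
    (hMspan y)



/-! ## Statement 13 -/

set_option maxHeartbeats 1000000 in
set_option synthInstance.maxHeartbeats 400000 in
/-- Let `O` be a complete discrete valuation ring with maximal ideal
`πO` and residue field `k` of characteristic `p`, with field of fractions of characteristic
`0`.  Let `A = iBi` be a source algebra of a block `B` with defect group `P` and
`L ≅ O_τ(P ⋊ E)` the canonically embedded source algebra of the Brauer correspondent.
Let `γ : L → A` be an `O`-algebra homomorphism with `γ(u) = u` for all `u ∈ P` whose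
reduction modulo `π` is the canonical inclusion `k ⊗ L → k ⊗ A`.  Then there is
`c ∈ 1 + πA^P` such that `γ(y) = c⁻¹ y c` for all `y ∈ L`. -/
theorem embedding_conjugate_to_inclusion
    {O k : Type u} [CommRing O] [IsLocalRing O] [CharZero O] [Field k] [Algebra O k]
    (p : ℕ) [Fact p.Prime] [CharP k p] [PerfectField k]
    (hres : Function.Surjective (algebraMap O k))
    (hdvr : IsDomain O ∧ IsPrincipalIdealRing O ∧ ¬ IsField O ∧
      IsAdicComplete (IsLocalRing.maximalIdeal O) O ∧
      RingHom.ker (algebraMap O k) = IsLocalRing.maximalIdeal O)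
    (piO : O) (hpi : IsLocalRing.maximalIdeal O = Ideal.span {piO})
    {G : Type u} [Group G] [Finite G]
    (hsplitG : ∀ H : Subgroup G, IsSplitAlgebra k (MonoidAlgebra k ↥H))
    (b : GA O G) [CentralElem O G b] (P : Subgroup G) (hdef : IsDefectGroup O G P b)
    (Pd : PuigEmbedData O k G (algebraMap O k) P b p)
    (γ : ↥Pd.L →ₐ[O] Pd.D.A)
    (hγP : ∀ u : ↥P, γ ⟨Pd.D.pUnit u, Pd.punit_mem u⟩ = Pd.D.pUnit u)
    (hγred : ∀ y : ↥Pd.L, ∃ a : Pd.D.A, γ y - (y : Pd.D.A) = piO • a) :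
    ∃ c cinv : Pd.D.A, c * cinv = 1 ∧ cinv * c = 1 ∧
      (∃ a : Pd.D.A, (∀ u : ↥P, Pd.D.pUnit u * a = a * Pd.D.pUnit u) ∧ c = 1 + piO • a) ∧
      ∀ y : ↥Pd.L, γ y = cinv * (y : Pd.D.A) * c :=
  embedding_conjugate_to_inclusion_aux p hres hdvr piO hpi hsplitG b P hdef Pd γ hγP hγred

end Paper
end
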